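/- For any binary word w of length n, Σ(w) ≥ Λ(w)/48, where Σ(w) is the sum of squared occurrence counts of all nonempty factors, and Λ(w) = max{ |η|² (ℓ+1)³ : η^ℓ is a factor of w, η a nonempty binary word, ℓ ≥ 1 }. -/

import Mathlib

open Filter

/-- Number of occurrences of `ξ` as a factor of `w` (occurrence at position `i`
means `ξ = w_{i+1}...w_{i+|ξ|}`). -/
def occ (w ξ : List Bool) : ℕ :=
  ((List.range w.length).filter (fun i => ξ.isPrefixOf (w.drop i))).length

/-- `ℓ`-fold concatenation `η^ℓ` of the word `η`. -/
def wpow (η : List Bool) (ℓ : ℕ) : List Bool := (List.replicate ℓ η).flatten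

/-- The Kamae–Xue complexity `Σ(w) = Σ_{ξ ∈ {0,1}^+} |w|_ξ²`.  Since only
factors of `w` contribute nonzero terms, the sum is taken over the (finite) set
of nonempty sublists of `w`, which contains all factors of `w`. -/
def kxSum (w : List Bool) : ℕ :=
  ∑ ξ ∈ w.sublists.toFinset.filter (fun ξ => ξ ≠ []), (occ w ξ) ^ 2

/-- `Λ(w) = max{|η|²(ℓ+1)³ : η nonempty, ℓ ≥ 1, η^ℓ a factor of w}`. -/
noncomputable def Lam (w : List Bool) : ℕ :=
  sSup {m | ∃ η ℓ, η ≠ ([] : List Bool) ∧ 1 ≤ ℓ ∧ wpow η ℓ <:+: w ∧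
    m = η.length ^ 2 * (ℓ + 1) ^ 3}

/-- A nonempty word is prime (primitive) if it is not a proper power. -/
def IsPrimeWord (η : List Bool) : Prop :=
  η ≠ [] ∧ ∀ ζ ℓ, 2 ≤ ℓ → η ≠ wpow ζ ℓ

/-- `|v|_{ξ,m}`: occurrences of `ξ` in `v` ending in the last `m` positions. -/
def occEnd (v ξ : List Bool) (m : ℕ) : ℕ :=
  ((List.range v.length).filter
    (fun i => ξ.isPrefixOf (v.drop i) && decide (v.length < i + ξ.length + m))).length

/-- The prefix `x_1 x_2 ⋯ x_n` of the infinite sequence `x`. -/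
def pref (x : ℕ → Bool) (n : ℕ) : List Bool := (List.range n).map x

/-- The factor of `w` of length `t` starting at position `i`. -/
def fac (w : List Bool) (i t : ℕ) : List Bool := (w.drop i).take t

lemma occ_eq (w ξ : List Bool) :
    occ w ξ = ((Finset.range w.length).filter (fun i => ξ.isPrefixOf (w.drop i))).card := by
  have h : (fun i => ξ.isPrefixOf (w.drop i)) = (fun i => decide (ξ <+: w.drop i)) := by
    funext i
    by_cases h : ξ <+: w.drop i <;>
      simp [h, Bool.eq_false_iff, List.isPrefixOf_iff_prefix, ne_eq]
  simp [occ, h, Finset.card, Finset.range, Finset.filter, Multiset.filter, Multiset.range,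
    Multiset.card]

lemma fac_length (w : List Bool) (i t : ℕ) (h : i + t ≤ w.length) :
    (fac w i t).length = t := by
  simp only [fac, List.length_take, List.length_drop]
  omega

lemma fac_sublist (w : List Bool) (i t : ℕ) : List.Sublist (fac w i t) w :=
  ((List.take_sublist _ _).trans (List.drop_sublist _ _))

lemma occ_ge (w ξ : List Bool) (I : Finset ℕ)
    (h : ∀ i ∈ I, i < w.length ∧ ξ.isPrefixOf (w.drop i)) :
    I.card ≤ occ w ξ := by
  rw [occ_eq]
  apply Finset.card_le_card
  intro i hi
  rcases h i hi with ⟨h1, h2⟩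
  exact Finset.mem_filter.mpr ⟨Finset.mem_range.mpr h1, h2⟩

lemma sum_occ_sq_ge (w : List Bool) (t c : ℕ) (ht : 1 ≤ t) (R : Finset ℕ) (g : ℕ → ℕ → ℕ)
    (hR : ∀ i ∈ R, i + t ≤ w.length)
    (hg : ∀ i ∈ R, ∀ j < c, g i j + t ≤ w.length ∧ fac w (g i j) t = fac w i t)
    (hinj : ∀ i ∈ R, ∀ i' ∈ R, ∀ j < c, ∀ j' < c, g i j = g i' j' → i = i' ∧ j = j') :
    c ^ 2 * R.card ≤ ∑ ξ ∈ R.image (fun i => fac w i t), occ w ξ ^ 2 := by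
  classical
  have key : ∀ ξ ∈ R.image (fun i => fac w i t),
      c * (R.filter (fun i => fac w i t = ξ)).card ≤ occ w ξ := by
    intro ξ hξ
    set Rξ := R.filter (fun i => fac w i t = ξ) with hRξ
    have hcard : ((Rξ ×ˢ Finset.range c).image (fun q : ℕ × ℕ => g q.1 q.2)).card
        = c * Rξ.card := by
      rw [Finset.card_image_of_injOn, Finset.card_product, Finset.card_range, mul_comm]
      intro q hq q' hq' hgq
      simp only [Finset.mem_coe, Finset.mem_product, Finset.mem_range, hRξ,
        Finset.mem_filter] at hq hq'
      have := hinj q.1 hq.1.1 q'.1 hq'.1.1 q.2 hq.2 q'.2 hq'.2 hgq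
      exact Prod.ext this.1 this.2
    rw [← hcard]
    apply occ_ge
    intro k hk
    simp only [Finset.mem_image, Finset.mem_product, Finset.mem_range, hRξ,
      Finset.mem_filter] at hk
    obtain ⟨⟨i, j⟩, ⟨⟨hiR, hfac⟩, hj⟩, rfl⟩ := hk
    obtain ⟨hle, hfe⟩ := hg i hiR j hj
    dsimp only
    constructor
    · omega
    · rw [List.isPrefixOf_iff_prefix, ← hfac, ← hfe]
      exact List.take_prefix _ _
  calc c ^ 2 * R.card = ∑ ξ ∈ R.image (fun i => fac w i t),
        c ^ 2 * (R.filter (fun i => fac w i t = ξ)).card := by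
        rw [← Finset.mul_sum, ← Finset.card_eq_sum_card_image]
    _ ≤ ∑ ξ ∈ R.image (fun i => fac w i t), occ w ξ ^ 2 := by
        apply Finset.sum_le_sum
        intro ξ hξ
        have h1 := key ξ hξ
        have h2 : 1 ≤ (R.filter (fun i => fac w i t = ξ)).card := by
          obtain ⟨i, hiR, rfl⟩ := Finset.mem_image.mp hξ
          exact Nat.one_le_iff_ne_zero.mpr
            (Finset.card_ne_zero_of_mem (Finset.mem_filter.mpr ⟨hiR, rfl⟩))
        calc c ^ 2 * (R.filter (fun i => fac w i t = ξ)).card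
            ≤ c ^ 2 * (R.filter (fun i => fac w i t = ξ)).card ^ 2 := by
              exact Nat.mul_le_mul_left _ (Nat.le_self_pow (by norm_num) _)
          _ = (c * (R.filter (fun i => fac w i t = ξ)).card) ^ 2 := by ring
          _ ≤ occ w ξ ^ 2 := Nat.pow_le_pow_left h1 2

lemma kxSum_ge (w : List Bool) (T R : Finset ℕ) (c : ℕ) (g : ℕ → ℕ → ℕ)
    (hT : ∀ t ∈ T, 1 ≤ t)
    (hR : ∀ t ∈ T, ∀ i ∈ R, i + t ≤ w.length)
    (hg : ∀ t ∈ T, ∀ i ∈ R, ∀ j < c, g i j + t ≤ w.length ∧ fac w (g i j) t = fac w i t)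
    (hinj : ∀ i ∈ R, ∀ i' ∈ R, ∀ j < c, ∀ j' < c, g i j = g i' j' → i = i' ∧ j = j') :
    T.card * (c ^ 2 * R.card) ≤ kxSum w := by
  classical
  have hlen : ∀ t ∈ T, ∀ ξ ∈ R.image (fun i => fac w i t), ξ.length = t := by
    intro t ht ξ hξ
    obtain ⟨i, hiR, rfl⟩ := Finset.mem_image.mp hξ
    exact fac_length w i t (hR t ht i hiR)
  have hdisj : (T : Set ℕ).PairwiseDisjoint (fun t => R.image (fun i => fac w i t)) := by
    intro t ht t' ht' htt'
    simp only [Finset.disjoint_left]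
    intro ξ h1 h2
    exact htt' ((hlen t ht ξ h1).symm.trans (hlen t' ht' ξ h2))
  calc T.card * (c ^ 2 * R.card) = ∑ _t ∈ T, c ^ 2 * R.card := by
        rw [Finset.sum_const, smul_eq_mul]
    _ ≤ ∑ t ∈ T, ∑ ξ ∈ R.image (fun i => fac w i t), occ w ξ ^ 2 := by
        apply Finset.sum_le_sum
        intro t ht
        exact sum_occ_sq_ge w t c (hT t ht) R g (hR t ht) (hg t ht) hinj
    _ = ∑ ξ ∈ T.biUnion (fun t => R.image (fun i => fac w i t)), occ w ξ ^ 2 :=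
        (Finset.sum_biUnion hdisj).symm
    _ ≤ kxSum w := by
        apply Finset.sum_le_sum_of_subset
        intro ξ hξ
        obtain ⟨t, ht, hξ⟩ := Finset.mem_biUnion.mp hξ
        obtain ⟨i, hiR, rfl⟩ := Finset.mem_image.mp hξ
        rw [Finset.mem_filter, List.mem_toFinset, List.mem_sublists]
        refine ⟨fac_sublist w i t, ?_⟩
        intro hnil
        have := fac_length w i t (hR t ht i hiR)
        rw [hnil] at this
        simp only [List.length_nil] at this
        have := hT t ht
        omega

lemma wpow_length (η : List Bool) (ℓ : ℕ) : (wpow η ℓ).length = ℓ * η.length := by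
  rw [wpow, List.length_flatten, List.map_replicate, List.sum_replicate, smul_eq_mul]

lemma wpow_add (η : List Bool) (a b : ℕ) : wpow η (a + b) = wpow η a ++ wpow η b := by
  rw [wpow, wpow, wpow, List.replicate_add, List.flatten_append]

lemma fac_shift (w x u y : List Bool) (hw : x ++ u ++ y = w) (i t : ℕ)
    (h : i + t ≤ u.length) :
    fac w (x.length + i) t = fac u i t := by
  subst hw
  rw [fac, fac, List.append_assoc, List.drop_length_add_append,
    List.drop_append_of_le_length (by omega),
    List.take_append_of_le_length (by simp; omega)]

lemma fac_wpow (η : List Bool) (ℓ r j t : ℕ) (hj : j ≤ ℓ)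
    (h : r + j * η.length + t ≤ ℓ * η.length) :
    fac (wpow η ℓ) (r + j * η.length) t = fac (wpow η ℓ) r t := by
  set p := η.length with hp
  have hsplit1 : wpow η ℓ = wpow η j ++ wpow η (ℓ - j) := by
    rw [← wpow_add]; congr 1; omega
  have hsplit2 : wpow η ℓ = wpow η (ℓ - j) ++ wpow η j := by
    rw [← wpow_add]; congr 1; omega
  have hjl : j * p ≤ ℓ * p := Nat.mul_le_mul_right p hj
  have hlj : (ℓ - j) * p = ℓ * p - j * p := by
    rw [Nat.sub_mul]
  have hrt : r + t ≤ (ℓ - j) * p := by omega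
  have lhs : fac (wpow η ℓ) (r + j * p) t = fac (wpow η (ℓ - j)) r t := by
    conv_lhs => rw [hsplit1]
    rw [fac, fac]
    have e : r + j * p = (wpow η j).length + r := by
      rw [wpow_length, ← hp]; omega
    rw [e, List.drop_length_add_append]
  have rhs : fac (wpow η ℓ) r t = fac (wpow η (ℓ - j)) r t := by
    conv_lhs => rw [hsplit2]
    rw [fac, fac,
      List.drop_append_of_le_length (by rw [wpow_length, ← hp]; omega),
      List.take_append_of_le_length
        (by simp only [List.length_drop, wpow_length, ← hp]; omega)]
  rw [lhs, rhs]

lemma arith_main (ℓ : ℕ) (h2 : 2 ≤ ℓ) :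
    (ℓ + 1) ^ 3 ≤ 48 * ((ℓ + 1) / 2 * (ℓ / 2) ^ 2) := by
  rcases Nat.lt_or_ge ℓ 4 with h4 | h4
  · interval_cases ℓ <;> norm_num
  · have h31 : ℓ + 1 ≤ 3 * (ℓ / 2) := by omega
    calc (ℓ + 1) ^ 3 ≤ (3 * (ℓ / 2)) ^ 3 := Nat.pow_le_pow_left h31 3
      _ = (27 * (ℓ / 2)) * (ℓ / 2) ^ 2 := by ring
      _ ≤ (48 * ((ℓ + 1) / 2)) * (ℓ / 2) ^ 2 := Nat.mul_le_mul_right _ (by omega)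
      _ = 48 * ((ℓ + 1) / 2 * (ℓ / 2) ^ 2) := by ring



/-- For any binary word `w`, `Σ(w) ≥ Λ(w)/48`. -/
theorem lam_le_48_kxSum (w : List Bool) :
    Lam w ≤ 48 * kxSum w := by
  apply csSup_le'
  rintro m ⟨η, ℓ, hη, hℓ, ⟨x, y, hxy⟩, rfl⟩
  set p := η.length with hp
  have hp1 : 1 ≤ p := List.length_pos_iff.mpr hη
  set a := x.length with ha
  have hn : a + ℓ * p + y.length = w.length := by
    have h := congrArg List.length hxy
    simp only [List.length_append, wpow_length] at h
    rw [← hp] at h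
    omega
  rcases Nat.lt_or_ge ℓ 2 with h2 | h2
  · -- case ℓ = 1
    have hℓ1 : ℓ = 1 := by omega
    subst hℓ1
    have key := kxSum_ge w (Finset.Icc 1 ((p+1)/2))
      ((Finset.range (p/2 + 1)).image (a + ·)) 1 (fun i _ => i)
      (fun t ht => (Finset.mem_Icc.mp ht).1)
      (by
        intro t ht i hi
        obtain ⟨r, hr, rfl⟩ := Finset.mem_image.mp hi
        rw [Finset.mem_range] at hr
        rw [Finset.mem_Icc] at ht
        omega)
      (by
        intro t ht i hi j hj
        obtain ⟨r, hr, rfl⟩ := Finset.mem_image.mp hi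
        rw [Finset.mem_range] at hr
        rw [Finset.mem_Icc] at ht
        refine ⟨?_, rfl⟩
        show a + r + t ≤ w.length
        omega)
      (by
        intro i _ i' _ j hj j' hj' hgg
        exact ⟨hgg, by omega⟩)
    rw [Finset.card_image_of_injective _ (add_right_injective a), Finset.card_range,
      Nat.card_Icc] at key
    set u := (p+1)/2 with hu
    set v := p/2 + 1 with hv
    have key' : (u + 1 - 1) * (1 ^ 2 * v) = u * v := by
      have e : u + 1 - 1 = u := by omega
      rw [e]; ring
    rw [key'] at key
    have h1 : p ≤ 2 * u := by omega
    have h1' : p ≤ 2 * v := by omega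
    have hpp : p * p ≤ 4 * (u * v) := by
      calc p * p ≤ (2 * u) * (2 * v) := Nat.mul_le_mul h1 h1'
        _ = 4 * (u * v) := by ring
    calc p ^ 2 * (1 + 1) ^ 3 = 8 * (p * p) := by ring
      _ ≤ 8 * (4 * (u * v)) := Nat.mul_le_mul_left 8 hpp
      _ = 32 * (u * v) := by ring
      _ ≤ 48 * (u * v) := Nat.mul_le_mul_right _ (by norm_num)
      _ ≤ 48 * kxSum w := Nat.mul_le_mul_left 48 key
  · -- case ℓ ≥ 2
    set s := (ℓ + 1) / 2 with hs
    set c := ℓ / 2 with hc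
    have hsc : s + c = ℓ := by omega
    have hc1 : 1 ≤ c := by omega
    have hwl : (wpow η ℓ).length = ℓ * p := by rw [wpow_length, ← hp]
    have hfacper : ∀ r j t : ℕ, r < p → j < c → 1 ≤ t → t ≤ p * s →
        a + r + j * p + t ≤ w.length ∧ fac w (a + r + j * p) t = fac w (a + r) t := by
      intro r j t hr hj ht1 ht2
      have hbound : r + j * p + t + 1 ≤ ℓ * p := by
        have e1 : (1 + j + s) * p ≤ ℓ * p := Nat.mul_le_mul_right p (by omega)
        have e2 : (1 + j + s) * p = p + j * p + p * s := by ring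
        omega
      have hlen : a + r + j * p + t ≤ w.length := by omega
      refine ⟨hlen, ?_⟩
      have e3 : a + r + j * p = x.length + (r + j * p) := by rw [← ha]; omega
      have e4 : a + r = x.length + r := by rw [← ha]
      rw [e3, e4, fac_shift w x (wpow η ℓ) y hxy (r + j * p) t (by rw [hwl]; omega),
        fac_shift w x (wpow η ℓ) y hxy r t (by rw [hwl]; omega)]
      have := fac_wpow η ℓ r j t (by omega) (by rw [← hp]; omega)
      rw [← hp] at this
      exact this
    have key := kxSum_ge w (Finset.Icc 1 (p * s))
      ((Finset.range p).image (a + ·)) c (fun i j => i + j * p)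
      (fun t ht => (Finset.mem_Icc.mp ht).1)
      (by
        intro t ht i hi
        obtain ⟨r, hr, rfl⟩ := Finset.mem_image.mp hi
        rw [Finset.mem_range] at hr
        rw [Finset.mem_Icc] at ht
        have h0 := (hfacper r 0 t hr (by omega) ht.1 ht.2).1
        show a + r + t ≤ w.length
        omega)
      (by
        intro t ht i hi j hj
        obtain ⟨r, hr, rfl⟩ := Finset.mem_image.mp hi
        rw [Finset.mem_range] at hr
        rw [Finset.mem_Icc] at ht
        have h0 := hfacper r j t hr hj ht.1 ht.2
        refine ⟨?_, ?_⟩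
        · show a + r + j * p + t ≤ w.length
          exact h0.1
        · show fac w (a + r + j * p) t = fac w (a + r) t
          exact h0.2)
      (by
        intro i hi i' hi' j hj j' hj' hgg
        obtain ⟨r, hr, rfl⟩ := Finset.mem_image.mp hi
        obtain ⟨r', hr', rfl⟩ := Finset.mem_image.mp hi'
        rw [Finset.mem_range] at hr hr'
        have hgg' : a + r + j * p = a + r' + j' * p := hgg
        have hjj : j = j' := by
          rcases lt_trichotomy j j' with h | h | h
          · exfalso
            have e1 : (j + 1) * p ≤ j' * p := Nat.mul_le_mul_right p h
            have e2 : (j + 1) * p = j * p + p := by ring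
            omega
          · exact h
          · exfalso
            have e1 : (j' + 1) * p ≤ j * p := Nat.mul_le_mul_right p h
            have e2 : (j' + 1) * p = j' * p + p := by ring
            omega
        subst hjj
        have : r = r' := by omega
        exact ⟨by rw [this], rfl⟩)
    rw [Finset.card_image_of_injective _ (add_right_injective a), Finset.card_range,
      Nat.card_Icc] at key
    have key2 : p * s * (c ^ 2 * p) ≤ kxSum w := by
      have e : p * s + 1 - 1 = p * s := by omega
      rwa [e] at key
    have harith : (ℓ + 1) ^ 3 ≤ 48 * (s * c ^ 2) := by
      have := arith_main ℓ h2
      rw [← hs, ← hc] at this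
      exact this
    calc p ^ 2 * (ℓ + 1) ^ 3 ≤ p ^ 2 * (48 * (s * c ^ 2)) :=
          Nat.mul_le_mul_left _ harith
      _ = 48 * (p * s * (c ^ 2 * p)) := by ring
      _ ≤ 48 * kxSum w := Nat.mul_le_mul_left 48 key2
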